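/- Let f : I ⊆ ℝ → ℝ be differentiable on I, a, b ∈ I with a < b, and suppose |f'| is quasi-convex on [a,b]. Then |(f(a)+f(b))/2 − (1/(b-a))∫_a^b f(u) du| ≤ ((b-a)/4) max{|f'(a)|, |f'(b)|}. -/

import Mathlib

open Real Set MeasureTheory intervalIntegral

noncomputable def beta (x y : ℝ) : ℝ := ∫ t in (0:ℝ)..1, t ^ (x-1) * (1-t) ^ (y-1)

def QuasiConvexOn' (s : Set ℝ) (g : ℝ → ℝ) : Prop :=
  ∀ x ∈ s, ∀ y ∈ s, ∀ lam ∈ Set.Icc (0:ℝ) 1, g (lam*x + (1-lam)*y) ≤ max (g x) (g y)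

theorem stmt18 (I : Set ℝ) (hI : Set.OrdConnected I)
    (f f' : ℝ → ℝ) (a b : ℝ) (ha : a ∈ I) (hb : b ∈ I) (hab : a < b)
    (hderiv : ∀ x ∈ I, HasDerivAt f (f' x) x)
    (hqc : QuasiConvexOn' (Set.Icc a b) (fun x => |f' x|)) :
    |(f a + f b)/2 - (1/(b-a)) * ∫ u in a..b, f u|
      ≤ (b-a)/4 * max |f' a| |f' b| := by
  have hba : (0:ℝ) < b - a := by linarith
  have hsub : Icc a b ⊆ I := hI.out ha hb
  set c : ℝ := (a + b) / 2 with hc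
  set M : ℝ := max |f' a| |f' b| with hM
  have hM0 : 0 ≤ M := le_trans (abs_nonneg _) (le_max_left _ _)
  -- pointwise bound from quasi-convexity
  have hbound : ∀ x ∈ Icc a b, |f' x| ≤ M := by
    intro x hx
    have hlam : (b - x) / (b - a) ∈ Icc (0:ℝ) 1 := by
      constructor
      · exact div_nonneg (by linarith [hx.2]) hba.le
      · rw [div_le_one hba]; linarith [hx.1]
    have h := hqc a (left_mem_Icc.2 hab.le) b (right_mem_Icc.2 hab.le) _ hlam
    have hx' : (b - x) / (b - a) * a + (1 - (b - x) / (b - a)) * b = x := by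
      field_simp
      ring
    simp only [hx'] at h
    exact h
  have huIcc : uIcc a b = Icc a b := uIcc_of_le hab.le
  have hderiv' : ∀ x ∈ uIcc a b, HasDerivAt f (f' x) x := fun x hx =>
    hderiv x (hsub (huIcc ▸ hx))
  -- integrability of f'
  have hint : IntervalIntegrable f' volume a b := by
    rw [intervalIntegrable_iff_integrableOn_Ioc_of_le hab.le]
    have hae : f' =ᵐ[volume.restrict (Ioc a b)] deriv f := by
      filter_upwards [ae_restrict_mem measurableSet_Ioc] with x hx
      exact ((hderiv x (hsub (Ioc_subset_Icc_self hx))).deriv).symm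
    refine Integrable.mono' (g := fun _ => M)
      (integrableOn_const measure_Ioc_lt_top.ne)
      (((measurable_deriv f).aestronglyMeasurable.restrict).congr hae.symm) ?_
    filter_upwards [ae_restrict_mem measurableSet_Ioc] with x hx
    simpa using hbound x (Ioc_subset_Icc_self hx)
  have hu : ∀ x ∈ uIcc a b, HasDerivAt (fun t => t - c) 1 x := fun x _ =>
    (hasDerivAt_id x).sub_const c
  have key : ∫ x in a..b, (x - c) * f' x
      = (b - c) * f b - (a - c) * f a - ∫ x in a..b, f x := by
    have := intervalIntegral.integral_mul_deriv_eq_deriv_mul hu hderiv'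
      intervalIntegrable_const hint
    simpa using this
  -- value of comparison integral
  have hac : a ≤ c := by rw [hc]; linarith
  have hcb : c ≤ b := by rw [hc]; linarith
  have i1 : IntervalIntegrable (fun x => |x - c|) volume a c :=
    ((continuous_id.sub continuous_const).abs).intervalIntegrable _ _
  have i2 : IntervalIntegrable (fun x => |x - c|) volume c b :=
    ((continuous_id.sub continuous_const).abs).intervalIntegrable _ _
  have habs : ∫ x in a..b, |x - c| = (b - a) ^ 2 / 4 := by
    rw [← intervalIntegral.integral_add_adjacent_intervals i1 i2]
    have e1 : ∫ x in a..c, |x - c| = ∫ x in a..c, (c - x) := by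
      apply intervalIntegral.integral_congr
      intro x hx
      rw [uIcc_of_le hac] at hx
      show |x - c| = c - x
      rw [abs_of_nonpos (by linarith [hx.2])]
      ring
    have e2 : ∫ x in c..b, |x - c| = ∫ x in c..b, (x - c) := by
      apply intervalIntegral.integral_congr
      intro x hx
      rw [uIcc_of_le hcb] at hx
      show |x - c| = x - c
      exact abs_of_nonneg (by linarith [hx.1])
    rw [e1, e2]
    have v1 : ∫ x in a..c, (c - x) = (c - a) ^ 2 / 2 := by
      rw [integral_comp_sub_left (fun x => x) c, integral_id]
      ring
    have v2 : ∫ x in c..b, (x - c) = (b - c) ^ 2 / 2 := by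
      rw [integral_comp_sub_right (fun x => x) c, integral_id]
      ring
    rw [v1, v2, hc]
    ring
  have hg : IntervalIntegrable (fun x => M * |x - c|) volume a b :=
    (continuous_const.mul ((continuous_id.sub continuous_const).abs)).intervalIntegrable _ _
  have hnorm : |∫ x in a..b, (x - c) * f' x| ≤ M * ((b - a) ^ 2 / 4) := by
    have h := intervalIntegral.norm_integral_le_abs_of_norm_le (μ := volume)
      (f := fun x => (x - c) * f' x) (g := fun x => M * |x - c|) ?_ hg
    · have hval : ∫ x in a..b, M * |x - c| = M * ((b - a) ^ 2 / 4) := by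
        rw [intervalIntegral.integral_const_mul, habs]
      rw [hval] at h
      simpa [abs_of_nonneg (by positivity : (0:ℝ) ≤ M * ((b - a) ^ 2 / 4))] using h
    · filter_upwards [ae_restrict_mem measurableSet_uIoc] with x hx
      rw [uIoc_of_le hab.le] at hx
      rw [Real.norm_eq_abs, abs_mul]
      calc |x - c| * |f' x| ≤ |x - c| * M :=
            mul_le_mul_of_nonneg_left (hbound x (Ioc_subset_Icc_self hx)) (abs_nonneg _)
        _ = M * |x - c| := mul_comm _ _
  have key2 : (f a + f b) / 2 - (1 / (b - a)) * ∫ u in a..b, f u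
      = (1 / (b - a)) * ∫ x in a..b, (x - c) * f' x := by
    rw [key, hc]
    field_simp
    ring
  rw [key2, abs_mul, abs_of_nonneg (by positivity : (0:ℝ) ≤ 1 / (b - a))]
  calc 1 / (b - a) * |∫ x in a..b, (x - c) * f' x|
      ≤ 1 / (b - a) * (M * ((b - a) ^ 2 / 4)) :=
        mul_le_mul_of_nonneg_left hnorm (by positivity)
    _ = (b - a) / 4 * M := by field_simp
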